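/- Let Y be an integrable real random variable with continuous strictly increasing CDF F, and let τ ∈ (0,1). Then θ* = F⁻¹(τ) minimizes θ ↦ E[ρ_τ(Y − θ)] over all real θ, where ρ_τ(u) = u·(τ − 1{u < 0}). -/

import Mathlib

open MeasureTheory

lemma check_diff (τ y a b : ℝ) (hab : a ≤ b) :
    (y - b) * (τ - (if y - b < 0 then (1:ℝ) else 0)) -
      (y - a) * (τ - (if y - a < 0 then (1:ℝ) else 0)) =
    ∫ t in Set.Ioc a b, ((if y ≤ t then (1:ℝ) else 0) - τ) := by
  haveI hfin : IsFiniteMeasure (volume.restrict (Set.Ioc a b)) :=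
    ⟨by rw [Measure.restrict_apply_univ, Real.volume_Ioc]; exact ENNReal.ofReal_lt_top⟩
  have hind : ∀ t : ℝ, (if y ≤ t then (1:ℝ) else 0) = (Set.Ici y).indicator (fun _ => (1:ℝ)) t := by
    intro t; simp [Set.indicator_apply, Set.mem_Ici]
  have hint1 : Integrable (fun t => (if y ≤ t then (1:ℝ) else 0)) (volume.restrict (Set.Ioc a b)) := by
    simp only [hind]
    exact (integrable_const (1:ℝ)).indicator measurableSet_Ici
  have hrhs : (∫ t in Set.Ioc a b, ((if y ≤ t then (1:ℝ) else 0) - τ)) =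
      (volume (Set.Ioc a b ∩ Set.Ici y)).toReal - τ * (b - a) := by
    rw [integral_sub hint1 (integrable_const τ)]
    congr 1
    · simp only [hind]
      rw [setIntegral_indicator measurableSet_Ici]
      simp [setIntegral_const, Measure.real]
    · simp [Real.volume_Ioc, ENNReal.toReal_ofReal (sub_nonneg.2 hab), mul_comm, hab]
  rw [hrhs]
  rcases le_or_gt y a with hya | hya
  · have : Set.Ioc a b ∩ Set.Ici y = Set.Ioc a b := by
      apply Set.inter_eq_left.2
      intro t ht; exact le_trans hya (le_of_lt ht.1)
    rw [this, Real.volume_Ioc, ENNReal.toReal_ofReal (sub_nonneg.2 hab)]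
    split_ifs with h1 h2 h2
    · ring
    · have : y = a := le_antisymm hya (by linarith)
      subst this; ring
    · have h3 : y = b := le_antisymm (hya.trans hab) (by linarith)
      have h4 : a = b := le_antisymm hab (h3 ▸ hya)
      subst h3; subst h4; ring
    · have h3 : y = b := le_antisymm (hya.trans hab) (by linarith)
      have h4 : a = b := le_antisymm hab (h3 ▸ hya)
      subst h3; subst h4; ring
  · rcases le_or_gt y b with hyb | hyb
    · have : Set.Ioc a b ∩ Set.Ici y = Set.Icc y b := by
        ext t; simp only [Set.mem_inter_iff, Set.mem_Ioc, Set.mem_Ici, Set.mem_Icc]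
        constructor
        · rintro ⟨⟨_, h2⟩, h3⟩; exact ⟨h3, h2⟩
        · rintro ⟨h1, h2⟩; exact ⟨⟨lt_of_lt_of_le hya h1, h2⟩, h1⟩
      rw [this, Real.volume_Icc, ENNReal.toReal_ofReal (sub_nonneg.2 hyb)]
      split_ifs with h1 h2 h2
      · linarith
      · ring
      · linarith
      · have : y = b := le_antisymm hyb (by linarith)
        subst this; ring
    · have : Set.Ioc a b ∩ Set.Ici y = ∅ := by
        ext t; simp only [Set.mem_inter_iff, Set.mem_Ioc, Set.mem_Ici, Set.mem_empty_iff_false, iff_false]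
        rintro ⟨⟨_, h2⟩, h3⟩; linarith
      rw [this]
      simp only [measure_empty, ENNReal.toReal_zero]
      split_ifs with h1 h2 h2
      · linarith
      · linarith
      · linarith
      · ring

lemma check_integrable {Ω : Type*} [MeasurableSpace Ω] (μ : Measure Ω) [IsProbabilityMeasure μ]
    (Y : Ω → ℝ) (hYmeas : Measurable Y) (hYint : Integrable Y μ) (τ θ : ℝ) :
    Integrable (fun ω => (Y ω - θ) * (τ - (if Y ω - θ < 0 then (1:ℝ) else 0))) μ := by
  have hmeas : Measurable (fun ω => (Y ω - θ) * (τ - (if Y ω - θ < 0 then (1:ℝ) else 0))) := by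
    apply (hYmeas.sub_const θ).mul
    apply measurable_const.sub
    exact Measurable.ite (measurableSet_lt (hYmeas.sub_const θ) measurable_const)
      measurable_const measurable_const
  apply Integrable.mono' (((hYint.abs.add (integrable_const |θ|)).const_mul (|τ| + 1)))
    hmeas.aestronglyMeasurable
  filter_upwards with ω
  rw [Real.norm_eq_abs, abs_mul]
  have h1 : |Y ω - θ| ≤ |Y ω| + |θ| := abs_sub _ _
  have h2 : |τ - (if Y ω - θ < 0 then (1:ℝ) else 0)| ≤ |τ| + 1 := by
    split_ifs <;> [exact (abs_sub _ _).trans (by norm_num); simp [abs_nonneg]]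
  calc |Y ω - θ| * |τ - (if Y ω - θ < 0 then (1:ℝ) else 0)|
      ≤ (|Y ω| + |θ|) * (|τ| + 1) := by
        apply mul_le_mul h1 h2 (abs_nonneg _) (by positivity)
    _ = (|τ| + 1) * (|Y ω| + |θ|) := by ring

lemma key {Ω : Type*} [MeasurableSpace Ω] (μ : Measure Ω) [IsProbabilityMeasure μ]
    (Y : Ω → ℝ) (hYmeas : Measurable Y) (hYint : Integrable Y μ) (τ a b : ℝ) (hab : a ≤ b) :
    (∫ ω, (Y ω - b) * (τ - (if Y ω - b < 0 then (1:ℝ) else 0)) ∂μ) -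
      (∫ ω, (Y ω - a) * (τ - (if Y ω - a < 0 then (1:ℝ) else 0)) ∂μ) =
    ∫ t in Set.Ioc a b, ((μ {ω | Y ω ≤ t}).toReal - τ) := by
  haveI hfin : IsFiniteMeasure (volume.restrict (Set.Ioc a b)) :=
    ⟨by rw [Measure.restrict_apply_univ, Real.volume_Ioc]; exact ENNReal.ofReal_lt_top⟩
  rw [← integral_sub (check_integrable μ Y hYmeas hYint τ b) (check_integrable μ Y hYmeas hYint τ a)]
  have hpt : ∀ ω, (Y ω - b) * (τ - (if Y ω - b < 0 then (1:ℝ) else 0)) -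
      (Y ω - a) * (τ - (if Y ω - a < 0 then (1:ℝ) else 0)) =
      ∫ t in Set.Ioc a b, ((if Y ω ≤ t then (1:ℝ) else 0) - τ) := fun ω => check_diff τ (Y ω) a b hab
  rw [integral_congr_ae (Filter.Eventually.of_forall hpt)]
  have hS : MeasurableSet {p : Ω × ℝ | Y p.1 ≤ p.2} :=
    measurableSet_le (hYmeas.comp measurable_fst) measurable_snd
  have hmeas : Measurable (Function.uncurry fun ω t => (if Y ω ≤ t then (1:ℝ) else 0) - τ) := by
    apply Measurable.sub _ measurable_const
    exact Measurable.ite hS measurable_const measurable_const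
  have hprod : Integrable (Function.uncurry fun ω t => (if Y ω ≤ t then (1:ℝ) else 0) - τ)
      (μ.prod (volume.restrict (Set.Ioc a b))) := by
    apply Integrable.mono' (integrable_const (1 + |τ|)) hmeas.aestronglyMeasurable
    filter_upwards with p
    rw [Real.norm_eq_abs]
    simp only [Function.uncurry]
    split_ifs
    · exact (abs_sub _ _).trans (by simp [abs_one, add_comm])
    · simp [add_comm, abs_nonneg]
  rw [integral_integral_swap hprod]
  apply setIntegral_congr_ae measurableSet_Ioc
  filter_upwards with t _
  rw [integral_sub _ (integrable_const τ)]
  · congr 1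
    · have : ∀ ω, (if Y ω ≤ t then (1:ℝ) else 0) = ({ω | Y ω ≤ t} : Set Ω).indicator (fun _ => (1:ℝ)) ω := by
        intro ω; simp [Set.indicator_apply, Set.mem_setOf_eq]
      rw [integral_congr_ae (Filter.Eventually.of_forall this)]
      rw [integral_indicator_const (1:ℝ) (measurableSet_le hYmeas measurable_const)]
      simp [Measure.real]
    · simp
  · have : Measurable (fun ω => if Y ω ≤ t then (1:ℝ) else 0) :=
      Measurable.ite (measurableSet_le hYmeas measurable_const) measurable_const measurable_const
    apply Integrable.mono' (integrable_const (1:ℝ)) this.aestronglyMeasurable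
    filter_upwards with ω
    rw [Real.norm_eq_abs]
    split_ifs <;> simp

theorem quantile_minimizes_check_loss {Ω : Type*} [MeasurableSpace Ω]
    (μ : Measure Ω) [IsProbabilityMeasure μ]
    (Y : Ω → ℝ) (hYmeas : Measurable Y) (hYint : Integrable Y μ)
    (F : ℝ → ℝ) (hF : ∀ y, F y = (μ {ω | Y ω ≤ y}).toReal)
    (hFcont : Continuous F) (hFmono : StrictMono F)
    (τ : ℝ) (hτ : τ ∈ Set.Ioo (0:ℝ) 1)
    (θs : ℝ) (hθs : F θs = τ) :
    ∀ θ : ℝ,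
      (∫ ω, (Y ω - θs) * (τ - (if Y ω - θs < 0 then (1:ℝ) else 0)) ∂μ) ≤
      (∫ ω, (Y ω - θ) * (τ - (if Y ω - θ < 0 then (1:ℝ) else 0)) ∂μ) := by
  intro θ
  rcases le_total θs θ with h | h
  · rw [← sub_nonneg, key μ Y hYmeas hYint τ θs θ h]
    apply setIntegral_nonneg measurableSet_Ioc
    intro t ht
    rw [← hF t, sub_nonneg, ← hθs]
    exact hFmono.monotone (le_of_lt ht.1)
  · have hkey := key μ Y hYmeas hYint τ θ θs h
    have hle : (∫ t in Set.Ioc θ θs, ((μ {ω | Y ω ≤ t}).toReal - τ)) ≤ 0 := by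
      apply setIntegral_nonpos measurableSet_Ioc
      intro t ht
      rw [← hF t, sub_nonpos, ← hθs]
      exact hFmono.monotone ht.2
    linarith [hkey ▸ hle]
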